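/- Let (A^ℤ, F) be a cellular automaton and Σ a weakly-specified subshift. If there exist two bounded-variation curves h₁, h₂ with h₁ ≁ h₂ such that F is equicontinuous at every point of Σ along both h₁ and h₂, then F is Σ-nilpotent, i.e., the Σ-limit set Λ_Σ(F) = ⋂_n cl(⋃_{m≥n} F^m(Σ)) is finite; in fact there exists t₀ with F^{t₀}(Σ) finite. -/

import Mathlib

open Classical

section Prelude

variable {A : Type*}

/-- The shift map on configurations. -/
def shift (x : ℤ → A) : ℤ → A := fun i => x (i + 1)

/-- The cylinder of the word `u` placed at position `p`. -/
def cylAt (u : List A) (p : ℤ) : Set (ℤ → A) :=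
  {x | ∀ i : Fin u.length, x (p + ((i : ℕ) : ℤ)) = u.get i}

/-- The region of consequences of a set of configurations. -/
def consSet (F : (ℤ → A) → (ℤ → A)) (X : Set (ℤ → A)) : Set (ℤ × ℕ) :=
  {q | ∀ x ∈ X, ∀ y ∈ X, F^[q.2] x q.1 = F^[q.2] y q.1}

/-- `F` is a cellular automaton with neighborhood `⟦r,s⟧`. -/
def IsCA (F : (ℤ → A) → (ℤ → A)) (r s : ℤ) : Prop :=
  (∀ x, F (shift x) = shift (F x)) ∧
  (∀ x y : ℤ → A, (∀ i : ℤ, r ≤ i → i ≤ s → x i = y i) → F x 0 = F y 0)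

/-- A subshift: a closed shift-invariant set. -/
def IsSubshift [TopologicalSpace A] (S : Set (ℤ → A)) : Prop :=
  IsClosed S ∧ shift '' S = S

/-- Two configurations agree on the centered window of radius `m`
(Cantor distance `< 2^{-m}`). -/
def close (m : ℕ) (x y : ℤ → A) : Prop := ∀ i : ℤ, |i| ≤ (m : ℤ) → x i = y i

/-- `y` is in the tube of radius `2^{-k}` along `h` around `x`:
for every time `n` the configurations `σ^{h n} ∘ F^n (x)` and `σ^{h n} ∘ F^n (y)`
agree on the window of radius `k`. -/
def tube (F : (ℤ → A) → (ℤ → A)) (h : ℕ → ℤ) (k : ℕ) (x y : ℤ → A) : Prop :=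
  ∀ n : ℕ, ∀ i : ℤ, |i| ≤ (k : ℤ) → F^[n] x (i + h n) = F^[n] y (i + h n)

/-- `x` is an equicontinuous point along `h` relative to `S`. -/
def eqPt (F : (ℤ → A) → (ℤ → A)) (S : Set (ℤ → A)) (h : ℕ → ℤ) (x : ℤ → A) : Prop :=
  ∀ k : ℕ, ∃ m : ℕ, ∀ y ∈ S, close m x y → tube F h k x y

/-- `F` is sensitive along `h` relative to `S`. -/
def sensitive (F : (ℤ → A) → (ℤ → A)) (S : Set (ℤ → A)) (h : ℕ → ℤ) : Prop :=
  ∃ k : ℕ, ∀ m : ℕ, ∀ x ∈ S, ∃ y ∈ S, close m x y ∧ ¬ tube F h k x y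

/-- `F` is right-expansive along `h` relative to `S`. -/
def rightExpansive (F : (ℤ → A) → (ℤ → A)) (S : Set (ℤ → A)) (h : ℕ → ℤ) : Prop :=
  ∃ k : ℕ, ∀ x ∈ S, ∀ y ∈ S, (∃ i : ℤ, 0 ≤ i ∧ x i ≠ y i) →
    ∀ z ∈ S, ¬ (tube F h k x z ∧ tube F h k y z)

/-- `F` is left-expansive along `h` relative to `S`. -/
def leftExpansive (F : (ℤ → A) → (ℤ → A)) (S : Set (ℤ → A)) (h : ℕ → ℤ) : Prop :=
  ∃ k : ℕ, ∀ x ∈ S, ∀ y ∈ S, (∃ i : ℤ, i ≤ 0 ∧ x i ≠ y i) →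
    ∀ z ∈ S, ¬ (tube F h k x z ∧ tube F h k y z)

/-- Curves with bounded variation. -/
def BV (h : ℕ → ℤ) : Prop := ∃ M : ℤ, 0 < M ∧ ∀ n : ℕ, |h (n + 1) - h n| ≤ M

/-- The preorder `h ≾ k` on curves. -/
def precsim (h k : ℕ → ℤ) : Prop := ∃ M : ℤ, 0 < M ∧ ∀ n : ℕ, h n ≤ k n + M

/-- The equivalence `h ∼ k` on curves. -/
def simEq (h k : ℕ → ℤ) : Prop := ∃ M : ℤ, 0 < M ∧ ∀ n : ℕ, k n - M ≤ h n ∧ h n ≤ k n + M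

/-- The word `u` belongs to the language of `S`. -/
def inLang (S : Set (ℤ → A)) (u : List A) : Prop := ∃ x ∈ S, x ∈ cylAt u 0

/-- Transitivity of a subshift, expressed on its language. -/
def transitiveSubshift (S : Set (ℤ → A)) : Prop :=
  ∀ u v : List A, inLang S u → inLang S v → ∃ w : List A, inLang S (u ++ w ++ v)

/-- `u` is a blocking word along `h` for the CA `F` of neighborhood `⟦r,s⟧`,
relative to the subshift `S`. -/
def blockingWord (F : (ℤ → A) → (ℤ → A)) (S : Set (ℤ → A)) (h : ℕ → ℤ) (r s : ℤ)
    (u : List A) : Prop :=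
  inLang S u ∧
  ∃ e : ℕ, 0 < e ∧
    (∀ n : ℕ, |h (n + 1) - h n| + s < (e : ℤ) ∧ |h (n + 1) - h n| - r < (e : ℤ)) ∧
    (e : ℤ) ≤ u.length ∧
    ∃ p : ℤ, {q : ℤ × ℕ | h q.2 ≤ q.1 ∧ q.1 < h q.2 + (e : ℤ)} ⊆ consSet F (S ∩ cylAt u p)

end Prelude
/-- A `σ`-periodic configuration. -/
def isPeriodicConf {A : Type*} (x : ℤ → A) : Prop :=
  ∃ p : ℕ, 0 < p ∧ ∀ i : ℤ, x (i + (p : ℤ)) = x i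

/-- Weak specification of a subshift. -/
def weaklySpecified {A : Type*} (S : Set (ℤ → A)) : Prop :=
  ∃ N : ℕ, ∀ u v : List A, inLang S u → inLang S v →
    ∃ n ≤ N, ∃ x ∈ S, isPeriodicConf x ∧
      (∀ i : Fin u.length, x ((i : ℕ) : ℤ) = u.get i) ∧
      (∀ i : Fin v.length, x (((n + u.length + (i : ℕ) : ℕ) : ℤ)) = v.get i)

/-- The `Σ`-limit set of a cellular automaton. -/
def limitSet {A : Type*} [TopologicalSpace A] (F : (ℤ → A) → (ℤ → A))
    (S : Set (ℤ → A)) : Set (ℤ → A) :=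
  ⋂ n : ℕ, closure (⋃ m : ℕ, ⋃ _ : n ≤ m, F^[m] '' S)

namespace Stmt11Aux

variable {A : Type*}

def shiftZ (j : ℤ) (x : ℤ → A) : ℤ → A := fun i => x (i + j)

lemma shiftZ_shiftZ (a b : ℤ) (x : ℤ → A) : shiftZ a (shiftZ b x) = shiftZ (a + b) x := by
  funext i; simp [shiftZ, add_assoc]

lemma shiftZ_zero (x : ℤ → A) : shiftZ 0 x = x := by funext i; simp [shiftZ]

lemma shift_eq_shiftZ (x : ℤ → A) : shift x = shiftZ 1 x := rfl

section F
variable {F : (ℤ → A) → (ℤ → A)} (hFc : ∀ x, F (shift x) = shift (F x))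
include hFc

lemma F_shiftZ (j : ℤ) (x : ℤ → A) : F (shiftZ j x) = shiftZ j (F x) := by
  induction j using Int.induction_on generalizing x with
  | zero => simp [shiftZ_zero]
  | succ n ih =>
      have h1 : shiftZ ((n : ℤ) + 1) x = shiftZ n (shiftZ 1 x) := by
        rw [shiftZ_shiftZ]
      rw [h1, ih, ← shift_eq_shiftZ, hFc, shift_eq_shiftZ, shiftZ_shiftZ]
  | pred n ih =>
      have key := ih (shiftZ (-1) x)
      have h1 : shiftZ (-(n:ℤ)) (shiftZ (-1) x) = shiftZ (-(n:ℤ) - 1) x := by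
        rw [shiftZ_shiftZ]; ring_nf
      rw [← h1, key]
      have h2 : F (shiftZ (-1) x) = shiftZ (-1) (F x) := by
        have := hFc (shiftZ (-1) x)
        rw [shift_eq_shiftZ, shiftZ_shiftZ, shift_eq_shiftZ] at this
        have h3 : shiftZ (1 + -1) x = x := by rw [show (1 : ℤ) + -1 = 0 by ring, shiftZ_zero]
        rw [h3] at this
        have := congrArg (shiftZ (-1)) this
        rw [shiftZ_shiftZ, show (-1 : ℤ) + 1 = 0 by ring, shiftZ_zero] at this
        exact this.symm
      rw [h2, shiftZ_shiftZ]; ring_nf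

lemma Fiter_shiftZ (t : ℕ) (j : ℤ) (x : ℤ → A) :
    F^[t] (shiftZ j x) = shiftZ j (F^[t] x) := by
  induction t with
  | zero => simp
  | succ n ih =>
      rw [Function.iterate_succ_apply', Function.iterate_succ_apply', ih, F_shiftZ hFc]

end F

section Loc
variable {F : (ℤ → A) → (ℤ → A)} {r s : ℤ} (hF : IsCA F r s)
include hF

lemma local_j {x y : ℤ → A} {j : ℤ} (hag : ∀ i, j + r ≤ i → i ≤ j + s → x i = y i) :
    F x j = F y j := by
  have hx : F x j = F (shiftZ j x) 0 := by
    rw [F_shiftZ hF.1]; simp [shiftZ]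
  have hy : F y j = F (shiftZ j y) 0 := by
    rw [F_shiftZ hF.1]; simp [shiftZ]
  rw [hx, hy]
  exact hF.2 _ _ (fun i h1 h2 => hag (i + j) (by omega) (by omega))

end Loc

end Stmt11Aux
namespace Stmt11Aux

variable {A : Type*}

/-- The set of `p`-periodic configurations. -/
def Pp (p : ℕ) : Set (ℤ → A) := {z | ∀ i : ℤ, z (i + (p : ℤ)) = z i}

lemma Pp_shift_invariant {p : ℕ} {z : ℤ → A} (hz : z ∈ Pp p) : shiftZ (p : ℤ) z = z := by
  funext i; exact hz i

lemma F_pres_Pp {F : (ℤ → A) → (ℤ → A)} (hFc : ∀ x, F (shift x) = shift (F x))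
    {p : ℕ} {z : ℤ → A} (hz : z ∈ Pp p) : F z ∈ Pp p := by
  intro i
  have : F z (i + (p : ℤ)) = shiftZ (p : ℤ) (F z) i := rfl
  rw [this, ← F_shiftZ hFc, Pp_shift_invariant hz]

lemma Fiter_pres_Pp {F : (ℤ → A) → (ℤ → A)} (hFc : ∀ x, F (shift x) = shift (F x))
    {p : ℕ} {z : ℤ → A} (hz : z ∈ Pp p) (t : ℕ) : F^[t] z ∈ Pp p := by
  induction t with
  | zero => exact hz
  | succ n ih => rw [Function.iterate_succ_apply']; exact F_pres_Pp hFc ih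

lemma Pp_mul {p : ℕ} {z : ℤ → A} (hz : z ∈ Pp p) (c : ℤ) (i : ℤ) :
    z (i + c * (p : ℤ)) = z i := by
  induction c using Int.induction_on with
  | zero => simp
  | succ n ih =>
      have : i + ((n : ℤ) + 1) * (p : ℤ) = (i + n * p) + p := by ring
      rw [this, hz, ih]
  | pred n ih =>
      have h1 := hz (i + (-(n : ℤ) - 1) * (p : ℤ))
      have h2 : i + (-(n : ℤ) - 1) * (p : ℤ) + (p : ℤ) = i + (-(n:ℤ)) * p := by ring
      rw [h2] at h1
      rw [← h1, ih]

lemma Pp_finite [Finite A] {p : ℕ} (hp : 0 < p) : (Pp (A := A) p).Finite := by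
  have hsub : Pp (A := A) p ⊆ Set.range (fun (f : Fin p → A) => fun i : ℤ =>
      f ⟨(i % (p : ℤ)).toNat, by
        have h1 : 0 ≤ i % (p:ℤ) := Int.emod_nonneg i (by exact_mod_cast hp.ne')
        have h2 : i % (p:ℤ) < (p:ℤ) := Int.emod_lt_of_pos i (by exact_mod_cast hp)
        omega⟩) := by
    intro z hz
    refine ⟨fun j => z (j : ℤ), ?_⟩
    funext i
    simp only
    have h1 : 0 ≤ i % (p:ℤ) := Int.emod_nonneg i (by exact_mod_cast hp.ne')
    have h2 : (((i % (p:ℤ)).toNat : ℕ) : ℤ) = i % (p:ℤ) := Int.toNat_of_nonneg h1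
    rw [h2]
    have := Pp_mul hz (i / (p:ℤ)) (i % (p:ℤ))
    rw [show i % (p:ℤ) + i / (p:ℤ) * (p:ℤ) = (p:ℤ) * (i / p) + i % p by ring,
      Int.mul_ediv_add_emod] at this
    exact this.symm
  exact (Set.finite_range _).subset hsub

end Stmt11Aux
namespace Stmt11Aux

variable {A : Type*}

lemma shiftZ_mem {S : Set (ℤ → A)} (hS2 : shift '' S = S) {x : ℤ → A} (hx : x ∈ S)
    (j : ℤ) : shiftZ j x ∈ S := by
  induction j using Int.induction_on generalizing x with
  | zero => rwa [shiftZ_zero]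
  | succ n ih =>
      have h1 : shiftZ ((n:ℤ) + 1) x = shiftZ n (shiftZ 1 x) := by rw [shiftZ_shiftZ]
      rw [h1]
      exact ih (by rw [← shift_eq_shiftZ]; rw [← hS2]; exact ⟨x, hx, rfl⟩)
  | pred n ih =>
      have h1 : shiftZ (-(n:ℤ) - 1) x = shiftZ (-(n:ℤ)) (shiftZ (-1) x) := by
        rw [shiftZ_shiftZ]; ring_nf
      have hx' : shiftZ (-1) x ∈ S := by
        have : x ∈ shift '' S := by rw [hS2]; exact hx
        obtain ⟨y, hy, hxy⟩ := this
        have : shiftZ (-1) x = y := by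
          rw [← hxy, shift_eq_shiftZ, shiftZ_shiftZ]
          norm_num [shiftZ_zero]
        rwa [this]
      rw [h1]
      exact ih hx'

section Unif

variable [Finite A] [TopologicalSpace A] [DiscreteTopology A]

lemma close_mono {m m' : ℕ} (h : m' ≤ m) {x y : ℤ → A} (hc : close m x y) : close m' x y :=
  fun i hi => hc i (by omega)

lemma tube_trans {F : (ℤ → A) → (ℤ → A)} {h : ℕ → ℤ} {k : ℕ} {x y z : ℤ → A}
    (h1 : tube F h k x y) (h2 : tube F h k x z) : tube F h k y z :=
  fun n i hi => (h1 n i hi).symm.trans (h2 n i hi)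

lemma uniform_eq {F : (ℤ → A) → (ℤ → A)} {S : Set (ℤ → A)} (hScl : IsClosed S)
    {h : ℕ → ℤ} (he : ∀ x ∈ S, eqPt F S h x) (k : ℕ) :
    ∃ m : ℕ, ∀ x ∈ S, ∀ y ∈ S, close m x y → tube F h k x y := by
  by_contra hcon
  push_neg at hcon
  choose xs hxs ys hys hclose hnt using hcon
  have hcomp : IsCompact S := hScl.isCompact
  have hneb : (Filter.map xs Filter.atTop).NeBot := Filter.map_neBot
  have hle : Filter.map xs Filter.atTop ≤ Filter.principal S := by
    rw [Filter.le_principal_iff, Filter.mem_map]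
    exact Filter.Eventually.of_forall (fun m => hxs m)
  obtain ⟨x, hxS, hcl⟩ := hcomp.exists_clusterPt hle
  obtain ⟨m₀, hm₀⟩ := he x hxS k
  -- the set of y close to x within m₀ is an open neighborhood of x
  have hUopen : IsOpen {y : ℤ → A | close m₀ x y} := by
    have hset : {y : ℤ → A | close m₀ x y} =
        ⋂ i ∈ Finset.Icc (-(m₀:ℤ)) (m₀:ℤ), (fun y : ℤ → A => y i) ⁻¹' {x i} := by
      ext y
      simp only [Set.mem_setOf_eq, Set.mem_iInter, Finset.mem_Icc, close,
        Set.mem_preimage, Set.mem_singleton_iff]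
      constructor
      · intro hc i hi
        exact (hc i (abs_le.mpr ⟨hi.1, hi.2⟩)).symm
      · intro hc i hi
        have := abs_le.mp hi
        exact (hc i ⟨this.1, this.2⟩).symm
    rw [hset]
    exact isOpen_biInter_finset (fun i _ =>
      (isOpen_discrete {x i}).preimage (continuous_apply i))
  have hU : {y : ℤ → A | close m₀ x y} ∈ nhds x :=
    hUopen.mem_nhds (fun i _ => rfl)
  have hV : xs '' Set.Ici m₀ ∈ Filter.map xs Filter.atTop :=
    Filter.image_mem_map (Filter.Ici_mem_atTop m₀)
  obtain ⟨y, hyU, hyV⟩ := (clusterPt_iff_nonempty.mp hcl hU hV)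
  obtain ⟨n, hn, rfl⟩ := hyV
  have hclx : close m₀ x (xs n) := hyU
  have hcly : close m₀ x (ys n) := by
    intro i hi
    have h1 : close m₀ (xs n) (ys n) := close_mono hn (hclose n)
    exact (hclx i hi).trans (h1 i hi)
  exact hnt n (tube_trans (hm₀ (xs n) (hxs n) hclx) (hm₀ (ys n) (hys n) hcly))

end Unif

end Stmt11Aux
namespace Stmt11Aux

variable {A : Type*}

section Prop'
variable {F : (ℤ → A) → (ℤ → A)} {r s : ℤ} (hF : IsCA F r s)
  {ρ : ℤ} (hρr : -ρ ≤ r) (hρs : s ≤ ρ)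
  {h : ℕ → ℤ} {M : ℤ} (hM : ∀ n : ℕ, |h (n + 1) - h n| ≤ M)
  {k : ℕ} (hk : M + ρ ≤ (k : ℤ))
  {x y : ℤ → A} (htube : tube F h k x y)
include hF hρr hρs hM hk htube

lemma propR (t : ℕ) (B : ℤ)
    (hag : ∀ i : ℤ, h 0 - k ≤ i → i ≤ B + t * ρ → x i = y i) :
    ∀ n : ℕ, n ≤ t → ∀ i : ℤ, h n - k ≤ i → i ≤ B + ((t : ℤ) - n) * ρ →
      F^[n] x i = F^[n] y i := by
  intro n
  induction n with
  | zero => intro _ i h1 h2; exact hag i h1 (by simpa using h2)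
  | succ n ih =>
      intro hnt i h1 h2
      push_cast at h2
      by_cases hcase : i ≤ h (n + 1) + k
      · have := htube (n + 1) (i - h (n + 1)) (abs_le.mpr ⟨by omega, by omega⟩)
        simpa [sub_add_cancel] using this
      · push_neg at hcase
        have hvar := abs_le.mp (hM n)
        rw [Function.iterate_succ_apply', Function.iterate_succ_apply']
        refine local_j hF (fun ξ hξ1 hξ2 => ?_)
        refine ih (by omega) ξ (by omega) ?_
        have : (t : ℤ) - n = ((t : ℤ) - (n + 1)) + 1 := by ring
        rw [this, add_mul, one_mul]
        omega

lemma propL (t : ℕ) (C : ℤ)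
    (hag : ∀ i : ℤ, C - t * ρ ≤ i → i ≤ h 0 + k → x i = y i) :
    ∀ n : ℕ, n ≤ t → ∀ i : ℤ, C - ((t : ℤ) - n) * ρ ≤ i → i ≤ h n + k →
      F^[n] x i = F^[n] y i := by
  intro n
  induction n with
  | zero => intro _ i h1 h2; exact hag i (by simpa using h1) h2
  | succ n ih =>
      intro hnt i h1 h2
      push_cast at h1
      by_cases hcase : h (n + 1) - k ≤ i
      · have := htube (n + 1) (i - h (n + 1)) (abs_le.mpr ⟨by omega, by omega⟩)
        simpa [sub_add_cancel] using this
      · push_neg at hcase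
        have hvar := abs_le.mp (hM n)
        rw [Function.iterate_succ_apply', Function.iterate_succ_apply']
        refine local_j hF (fun ξ hξ1 hξ2 => ?_)
        refine ih (by omega) ξ ?_ (by omega)
        have : (t : ℤ) - n = ((t : ℤ) - (n + 1)) + 1 := by ring
        rw [this, add_mul, one_mul]
        omega

end Prop'

end Stmt11Aux
namespace Stmt11Aux

variable {A : Type*}

lemma get_ofFn'' {n : ℕ} (f : Fin n → A) (i : Fin (List.ofFn f).length) :
    (List.ofFn f).get i = f ⟨i.1, by simpa using i.2⟩ := by
  rw [List.get_ofFn]; rfl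

section Core
variable [Finite A] [TopologicalSpace A] [DiscreteTopology A]

lemma core {F : (ℤ → A) → (ℤ → A)} {r s : ℤ} (hF : IsCA F r s)
    {S : Set (ℤ → A)} (hS : IsSubshift S) (hws : weaklySpecified S)
    {g₁ g₂ : ℕ → ℤ} (hb₁ : BV g₁) (hb₂ : BV g₂)
    (hdiff : ∀ B : ℤ, ∃ t : ℕ, B ≤ g₁ t - g₂ t)
    (he₁ : ∀ x ∈ S, eqPt F S g₁ x) (he₂ : ∀ x ∈ S, eqPt F S g₂ x)
    (hne : S.Nonempty) :
    ∃ t p : ℕ, 0 < p ∧ ∀ x ∈ S, F^[t] x ∈ Pp p := by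
  obtain ⟨M₁, hM₁pos, hM₁⟩ := hb₁
  obtain ⟨M₂, hM₂pos, hM₂⟩ := hb₂
  set ρ : ℤ := max (max (-r) s) 1 with hρdef
  have hρr : -ρ ≤ r := by
    have : -r ≤ ρ := le_trans (le_max_left _ _) (le_max_left _ _); omega
  have hρs : s ≤ ρ := le_trans (le_max_right _ _) (le_max_left _ _)
  have hρ1 : 1 ≤ ρ := le_max_right _ _
  set k : ℕ := (M₁ + M₂ + ρ).toNat with hkdef
  have hkZ : (k : ℤ) = M₁ + M₂ + ρ := Int.toNat_of_nonneg (by omega)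
  have hk₁ : M₁ + ρ ≤ (k : ℤ) := by omega
  have hk₂ : M₂ + ρ ≤ (k : ℤ) := by omega
  obtain ⟨m₁, hm₁⟩ := uniform_eq hS.1 he₁ k
  obtain ⟨m₂, hm₂⟩ := uniform_eq hS.1 he₂ k
  set m : ℕ := max m₁ m₂ with hmdef
  have hm₁' : ∀ x ∈ S, ∀ y ∈ S, close m x y → tube F g₁ k x y := fun x hx y hy hc =>
    hm₁ x hx y hy (close_mono (le_max_left _ _) hc)
  have hm₂' : ∀ x ∈ S, ∀ y ∈ S, close m x y → tube F g₂ k x y := fun x hx y hy hc =>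
    hm₂ x hx y hy (close_mono (le_max_right _ _) hc)
  obtain ⟨N, hN⟩ := hws
  obtain ⟨x₀, hx₀S⟩ := hne
  have hnil : inLang S ([] : List A) := ⟨x₀, hx₀S, fun i => (Fin.elim0 i)⟩
  obtain ⟨n₀, hn₀, y₀, hy₀S, ⟨p, hp, hyper⟩, -, -⟩ := hN [] [] hnil hnil
  set B₁ : ℤ := max (g₁ 0 + (k:ℤ)) (m:ℤ) with hB₁def
  set maxv : ℤ := max (m:ℤ) ((k:ℤ) - g₂ 0) with hmaxvdef
  set Δ : ℤ := B₁ + (N:ℤ) + 1 + maxv + 2 * (p:ℤ) + 1 with hΔdef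
  set t : ℕ := (hdiff Δ).choose with htdef
  have ht : Δ ≤ g₁ t - g₂ t := (hdiff Δ).choose_spec
  refine ⟨t, p, hp, ?_⟩
  set w : ℤ := g₁ t + (k:ℤ) - 2 * (p:ℤ) with hwdef
  set A₁ : ℤ := min (w - (t:ℤ) * ρ) (-(m:ℤ)) with hA₁def
  have hA₁B₁ : A₁ ≤ B₁ := by
    have h1 : A₁ ≤ -(m:ℤ) := min_le_right _ _
    have h2 : (m:ℤ) ≤ B₁ := le_max_right _ _
    omega
  set lenZ : ℤ := max (g₁ t + (k:ℤ) - B₁ + (t:ℤ) * ρ) ((m:ℤ) + maxv + 1) with hlenZdef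
  set len : ℕ := lenZ.toNat with hlendef
  have hlen : lenZ ≤ (len : ℤ) := Int.self_le_toNat _
  -- main claim
  have hQ : ∀ x ∈ S, ∃ P : ℤ, ∀ i : ℤ, 0 ≤ i → i < 2 * (p:ℤ) →
      F^[t] x (w + i) = F^[t] y₀ (w + i - P) := by
    intro x hx
    set L : ℕ := (B₁ - A₁ + 1).toNat with hLdef
    have hL : (L : ℤ) = B₁ - A₁ + 1 := Int.toNat_of_nonneg (by omega)
    set u : List A := List.ofFn (fun i : Fin L => x (A₁ + ((i:ℕ):ℤ))) with hudef
    have hulen : u.length = L := List.length_ofFn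
    have hulenZ : (u.length : ℤ) = B₁ - A₁ + 1 := by rw [hulen]; exact hL
    have hu_get : ∀ (j : ℕ) (hj : j < u.length), u.get ⟨j, hj⟩ = x (A₁ + (j:ℤ)) := by
      intro j hj
      simp only [hudef] at hj ⊢
      rw [get_ofFn'']
    have hu_lang : inLang S u := by
      refine ⟨shiftZ A₁ x, shiftZ_mem hS.2 hx A₁, fun i => ?_⟩
      rw [hu_get i.1 i.2]
      show x (0 + ((i : ℕ) : ℤ) + A₁) = x (A₁ + ((i : ℕ) : ℤ))
      congr 1 <;> omega
    set v : List A := List.ofFn (fun i : Fin len => y₀ ((i:ℕ):ℤ)) with hvdef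
    have hvlen : v.length = len := List.length_ofFn
    have hv_get : ∀ (j : ℕ) (hj : j < v.length), v.get ⟨j, hj⟩ = y₀ (j:ℤ) := by
      intro j hj
      simp only [hvdef] at hj ⊢
      rw [get_ofFn'']
    have hv_lang : inLang S v := by
      refine ⟨y₀, hy₀S, fun i => ?_⟩
      rw [hv_get i.1 i.2]
      show y₀ (0 + ((i : ℕ) : ℤ)) = y₀ ((i : ℕ) : ℤ)
      congr 1 <;> omega
    obtain ⟨n, hnN, q', hq'S, -, hq'u, hq'v⟩ := hN u v hu_lang hv_lang
    set q : ℤ → A := shiftZ (-A₁) q' with hqdef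
    have hqS : q ∈ S := shiftZ_mem hS.2 hq'S _
    have hq_x : ∀ i : ℤ, A₁ ≤ i → i ≤ B₁ → x i = q i := by
      intro i h1 h2
      have hj : ((i - A₁).toNat : ℤ) = i - A₁ := Int.toNat_of_nonneg (by omega)
      have hjlt : (i - A₁).toNat < u.length := by omega
      have h3 := hq'u ⟨(i - A₁).toNat, hjlt⟩
      rw [hu_get _ hjlt] at h3
      have h3' : q' (((i - A₁).toNat : ℕ) : ℤ) = x (A₁ + ((i - A₁).toNat : ℤ)) := by
        simpa using h3
      have hq'eval : q i = q' (((i - A₁).toNat : ℕ) : ℤ) := by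
        simp only [hqdef, shiftZ]; congr 1; omega
      rw [hq'eval, h3']
      congr 1
      omega
    set P : ℤ := B₁ + 1 + (n:ℤ) with hPdef
    have hq_y : ∀ i : ℤ, P ≤ i → i < P + (len:ℤ) → q i = y₀ (i - P) := by
      intro i h1 h2
      have hj : ((i - P).toNat : ℤ) = i - P := Int.toNat_of_nonneg (by omega)
      have hjlt : (i - P).toNat < v.length := by
        have : (v.length : ℤ) = (len : ℤ) := by rw [hvlen]
        omega
      have h3 := hq'v ⟨(i - P).toNat, hjlt⟩
      rw [hv_get _ hjlt] at h3
      have h3' : q' (((n + u.length + (i - P).toNat : ℕ)) : ℤ) = y₀ (((i - P).toNat : ℕ) : ℤ) := by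
        simpa using h3
      have hq'eval : q i = q' (((n + u.length + (i - P).toNat : ℕ)) : ℤ) := by
        simp only [hqdef, shiftZ]; congr 1
        push_cast
        simp only [hPdef] at h1 h2 ⊢
        omega
      rw [hq'eval, h3', hj]
    -- step 1 : compare x and q along g₁
    have hclose1 : close m x q := by
      intro i hi
      rw [abs_le] at hi
      refine hq_x i ?_ ?_
      · exact le_trans (min_le_right _ _) hi.1
      · exact le_trans hi.2 (le_max_right _ _)
    have tube1 : tube F g₁ k x q := hm₁' x hx q hqS hclose1
    have step1 : ∀ i : ℤ, w ≤ i → i ≤ g₁ t + (k:ℤ) → F^[t] x i = F^[t] q i := by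
      have hagL : ∀ i : ℤ, w - (t:ℤ) * ρ ≤ i → i ≤ g₁ 0 + (k:ℤ) → x i = q i := by
        intro i h1 h2
        refine hq_x i ?_ ?_
        · exact le_trans (min_le_left _ _) h1
        · exact le_trans h2 (le_max_left _ _)
      have := propL hF hρr hρs hM₁ hk₁ tube1 t w hagL t le_rfl
      intro i h1 h2
      refine this i ?_ h2
      simp only [sub_self, zero_mul, sub_zero]
      omega
    -- step 2 : compare q and Y along g₂, after shifting by E
    set Y : ℤ → A := shiftZ (-P) y₀ with hYdef
    have hYS : Y ∈ S := shiftZ_mem hS.2 hy₀S _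
    set E : ℤ := P + maxv with hEdef
    set qh : ℤ → A := shiftZ E q with hqhdef
    set Yh : ℤ → A := shiftZ E Y with hYhdef
    have hqhS : qh ∈ S := shiftZ_mem hS.2 hqS _
    have hYhS : Yh ∈ S := shiftZ_mem hS.2 hYS _
    have hagree2 : ∀ i : ℤ, -maxv ≤ i → i < (len:ℤ) - maxv → qh i = Yh i := by
      intro i h1 h2
      have h3 : q (i + E) = y₀ (i + E - P) := hq_y (i + E) (by omega) (by omega)
      have h4 : Yh i = y₀ (i + E - P) := by
        simp only [hYhdef, hYdef, shiftZ]
        congr 1 <;> omega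
      rw [hqhdef]
      show q (i + E) = Yh i
      rw [h3, h4]
    have hmlen : (m:ℤ) + maxv + 1 ≤ (len:ℤ) := le_trans (le_max_right _ _) hlen
    have hclose2 : close m qh Yh := by
      intro i hi
      rw [abs_le] at hi
      have hmv : (m:ℤ) ≤ maxv := le_max_left _ _
      exact hagree2 i (by omega) (by omega)
    have tube2 : tube F g₂ k qh Yh := hm₂' qh hqhS Yh hYhS hclose2
    set B' : ℤ := g₁ t + (k:ℤ) - E with hB'def
    have step2 : ∀ i : ℤ, g₂ t - (k:ℤ) ≤ i → i ≤ B' → F^[t] qh i = F^[t] Yh i := by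
      have hagR : ∀ i : ℤ, g₂ 0 - (k:ℤ) ≤ i → i ≤ B' + (t:ℤ) * ρ → qh i = Yh i := by
        intro i h1 h2
        have hkv : (k:ℤ) - g₂ 0 ≤ maxv := le_max_right _ _
        refine hagree2 i (by omega) ?_
        have hlb : g₁ t + (k:ℤ) - B₁ + (t:ℤ) * ρ ≤ (len:ℤ) :=
          le_trans (le_max_left _ _) hlen
        have hPB : B₁ + 1 ≤ P := by simp only [hPdef]; omega
        simp only [hB'def, hEdef] at h2
        omega
      have := propR hF hρr hρs hM₂ hk₂ tube2 t B' hagR t le_rfl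
      intro i h1 h2
      refine this i h1 ?_
      simp only [sub_self, zero_mul, add_zero]
      omega
    refine ⟨P, fun i h0 h2p => ?_⟩
    have hxq : F^[t] x (w + i) = F^[t] q (w + i) := by
      refine step1 (w + i) (by omega) ?_
      simp only [hwdef]
      omega
    have hqY : F^[t] q (w + i) = F^[t] Y (w + i) := by
      have hEb : E ≤ B₁ + 1 + (N:ℤ) + maxv := by
        simp only [hEdef, hPdef]
        omega
      have h2 := step2 (w + i - E) (by
          have : Δ ≤ g₁ t - g₂ t := ht
          simp only [hwdef]
          simp only [hΔdef] at this
          have hk0 : (0:ℤ) ≤ (k:ℤ) := Int.natCast_nonneg k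
          omega)
        (by simp only [hB'def, hwdef]; omega)
      have e1 : F^[t] qh (w + i - E) = F^[t] q (w + i) := by
        rw [hqhdef, Fiter_shiftZ hF.1]
        show F^[t] q ((w + i - E) + E) = F^[t] q (w + i)
        rw [show (w + i - E) + E = w + i by ring]
      have e2 : F^[t] Yh (w + i - E) = F^[t] Y (w + i) := by
        rw [hYhdef, Fiter_shiftZ hF.1]
        show F^[t] Y ((w + i - E) + E) = F^[t] Y (w + i)
        rw [show (w + i - E) + E = w + i by ring]
      rw [← e1, ← e2, h2]
    have hYy : F^[t] Y (w + i) = F^[t] y₀ (w + i - P) := by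
      rw [hYdef, Fiter_shiftZ hF.1]
      show F^[t] y₀ ((w + i) + -P) = F^[t] y₀ (w + i - P)
      rw [show (w + i) + -P = w + i - P by ring]
    rw [hxq, hqY, hYy]
  -- conclude: F^[t] x is p-periodic for every x ∈ S
  intro x hx
  intro ξ
  obtain ⟨P', hP'⟩ := hQ (shiftZ (ξ - w) x) (shiftZ_mem hS.2 hx _)
  have hz : F^[t] y₀ ∈ Pp p := Fiter_pres_Pp hF.1 hyper t
  have h0 := hP' 0 le_rfl (by omega)
  have hpp := hP' (p:ℤ) (by omega) (by omega)
  have e0 : F^[t] (shiftZ (ξ - w) x) (w + 0) = F^[t] x ξ := by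
    rw [Fiter_shiftZ hF.1]
    show F^[t] x ((w + 0) + (ξ - w)) = F^[t] x ξ
    rw [show (w + 0) + (ξ - w) = ξ by ring]
  have ep : F^[t] (shiftZ (ξ - w) x) (w + (p:ℤ)) = F^[t] x (ξ + (p:ℤ)) := by
    rw [Fiter_shiftZ hF.1]
    show F^[t] x ((w + (p:ℤ)) + (ξ - w)) = F^[t] x (ξ + (p:ℤ))
    rw [show (w + (p:ℤ)) + (ξ - w) = ξ + (p:ℤ) by ring]
  have hper : F^[t] y₀ (w + (p:ℤ) - P') = F^[t] y₀ (w + 0 - P') := by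
    rw [show w + (p:ℤ) - P' = (w + 0 - P') + (p:ℤ) by ring]
    exact hz (w + 0 - P')
  rw [← e0, ← ep, h0, hpp, hper]

end Core

end Stmt11Aux
namespace Stmt11Aux

lemma cases_of_not_simEq {h₁ h₂ : ℕ → ℤ} (hns : ¬ simEq h₁ h₂) :
    (∀ B : ℤ, ∃ t : ℕ, B ≤ h₁ t - h₂ t) ∨ (∀ B : ℤ, ∃ t : ℕ, B ≤ h₂ t - h₁ t) := by
  by_contra hc
  push_neg at hc
  obtain ⟨⟨B₁, hB₁⟩, ⟨B₂, hB₂⟩⟩ := hc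
  refine hns ⟨max (max B₁ B₂) 1, by simp, fun n => ⟨?_, ?_⟩⟩
  · have h1 := hB₂ n
    have h2 : B₂ ≤ max (max B₁ B₂) 1 := le_trans (le_max_right _ _) (le_max_left _ _)
    omega
  · have h1 := hB₁ n
    have h2 : B₁ ≤ max (max B₁ B₂) 1 := le_trans (le_max_left _ _) (le_max_left _ _)
    omega

end Stmt11Aux


open Stmt11Aux

/-- full equicontinuity along two non-equivalent bounded-variation
curves on a weakly-specified subshift forces `Σ`-nilpotency. -/
theorem stmt11 {A : Type*} [Fintype A] [TopologicalSpace A] [DiscreteTopology A]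
    (F : (ℤ → A) → (ℤ → A)) (r s : ℤ) (hF : IsCA F r s)
    (S : Set (ℤ → A)) (hS : IsSubshift S) (hws : weaklySpecified S)
    (h₁ h₂ : ℕ → ℤ) (hb₁ : BV h₁) (hb₂ : BV h₂) (hns : ¬ simEq h₁ h₂)
    (he₁ : ∀ x ∈ S, eqPt F S h₁ x) (he₂ : ∀ x ∈ S, eqPt F S h₂ x) :
    (limitSet F S).Finite ∧ ∃ t₀ : ℕ, (F^[t₀] '' S).Finite := by
  
  rcases S.eq_empty_or_nonempty with hS0 | hne
  · constructor
    · have hls : limitSet F S = ∅ := by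
        simp [limitSet, hS0, Set.iInter_const]
      rw [hls]; exact Set.finite_empty
    · exact ⟨0, by simp [hS0]⟩
  · have hcore : ∃ t p : ℕ, 0 < p ∧ ∀ x ∈ S, F^[t] x ∈ Pp p := by
      rcases cases_of_not_simEq hns with hd | hd
      · exact core hF hS hws hb₁ hb₂ hd he₁ he₂ hne
      · exact core hF hS hws hb₂ hb₁ hd he₂ he₁ hne
    obtain ⟨t, p, hp, hper⟩ := hcore
    have hsub : ∀ m : ℕ, t ≤ m → F^[m] '' S ⊆ Pp p := by
      rintro m hm z ⟨x, hx, rfl⟩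
      rw [show m = (m - t) + t from (Nat.sub_add_cancel hm).symm,
        Function.iterate_add_apply]
      exact Fiter_pres_Pp hF.1 (hper x hx) (m - t)
    have hfin : (Pp (A := A) p).Finite := Pp_finite hp
    constructor
    · refine hfin.subset ?_
      intro z hz
      have h1 : z ∈ closure (⋃ m : ℕ, ⋃ _ : t ≤ m, F^[m] '' S) := Set.mem_iInter.mp hz t
      have h2 : (⋃ m : ℕ, ⋃ _ : t ≤ m, F^[m] '' S) ⊆ Pp p := Set.iUnion₂_subset hsub
      exact closure_minimal h2 hfin.isClosed h1
    · exact ⟨t, hfin.subset (hsub t le_rfl)⟩
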